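/- arXiv:1705.11156 — 3 statements merged into one kernel-verified Lean document; each statement's English description precedes it below -/
import Mathlib

section
/- Let φ : ℝ² → ℝ be a weighted homogeneous polynomial of type (d − w₂; w₁, w₂) with w₁ > w₂, such that the origin is an isolated zero of ∂φ/∂x₁ (i.e. ∂φ/∂x₁ vanishes only at 0 in some neighborhood of 0), and set f(x₁, x₂) = x₂·φ(x₁, x₂). Then there exist C > 0 and a neighborhood U of 0 such that ‖∇f(x)‖ ≥ C‖x‖^{(d−w₁)/w₂} for all x ∈ U. -/
open MvPolynomial

/-- Euclidean norm of the gradient of a polynomial `f` at `x`. -/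
noncomputable def gradNorm {n : ℕ} (f : MvPolynomial (Fin n) ℝ) (x : Fin n → ℝ) : ℝ :=
  Real.sqrt (∑ i, (eval x (pderiv i f)) ^ 2)

/-- Euclidean norm on `Fin n → ℝ`. -/
noncomputable def eNorm {n : ℕ} (x : Fin n → ℝ) : ℝ :=
  Real.sqrt (∑ i, (x i) ^ 2)

/-- `f` is weighted homogeneous of type `(d; w)`: every monomial `x^α` appearing in `f`
satisfies `∑ i, α i * w i = d`. -/
def IsWeightedHomog {n : ℕ} (f : MvPolynomial (Fin n) ℝ) (w : Fin n → ℕ) (d : ℕ) : Prop :=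
  ∀ α ∈ f.support, ∑ i, α i * w i = d

/-- `f` is non-degenerate (isolated singularity at the origin): in some neighborhood of `0`
the gradient of `f` vanishes only at the origin. -/
def Nondeg {n : ℕ} (f : MvPolynomial (Fin n) ℝ) : Prop :=
  ∃ U ∈ nhds (0 : Fin n → ℝ), ∀ x ∈ U, (∀ i, eval x (pderiv i f) = 0) → x = 0

/-- The Łojasiewicz inequality `‖∇f(x)‖ ≥ C ‖x‖^lam` holds near `0` for some `C > 0`. -/
def LojIneq {n : ℕ} (f : MvPolynomial (Fin n) ℝ) (lam : ℝ) : Prop :=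
  ∃ C > (0 : ℝ), ∃ U ∈ nhds (0 : Fin n → ℝ), ∀ x ∈ U, C * eNorm x ^ lam ≤ gradNorm f x

/-- The Łojasiewicz exponent of `f`: the infimum of all `lam > 0` for which the
Łojasiewicz inequality holds near the origin. -/
noncomputable def lojExp {n : ℕ} (f : MvPolynomial (Fin n) ℝ) : ℝ :=
  sInf {lam : ℝ | 0 < lam ∧ LojIneq f lam}

/-- The weighted "radius" `ρ(x) = (∑ i |x i| ^ (2 / w i)) ^ (1/2)`. -/
noncomputable def rho {n : ℕ} (w : Fin n → ℕ) (x : Fin n → ℝ) : ℝ :=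
  Real.sqrt (∑ i, |x i| ^ ((2 : ℝ) / (w i : ℝ)))

/-- The weighted norm of the gradient:
`‖grad_w f(x)‖_w = (∑ i ρ(x)^(2 wᵢ) |∂f/∂xᵢ(x)|²)^(1/2)`. -/
noncomputable def wGradNorm {n : ℕ} (w : Fin n → ℕ) (f : MvPolynomial (Fin n) ℝ)
    (x : Fin n → ℝ) : ℝ :=
  Real.sqrt (∑ i, rho w x ^ (2 * w i) * (eval x (pderiv i f)) ^ 2)



-- L1: scaling identity
lemma homog_eval_scale {n : ℕ} {p : MvPolynomial (Fin n) ℝ} {w : Fin n → ℕ} {m : ℕ}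
    (h : IsWeightedHomog p w m) (t : ℝ) (x : Fin n → ℝ) :
    eval (fun i => t ^ (w i) * x i) p = t ^ m * eval x p := by
  rw [eval_eq', eval_eq', Finset.mul_sum]
  refine Finset.sum_congr rfl fun α hα => ?_
  have hdeg := h α hα
  calc coeff α p * ∏ i, (t ^ w i * x i) ^ α i
      = coeff α p * ((∏ i, (t ^ (α i * w i))) * ∏ i, x i ^ α i) := by
        rw [← Finset.prod_mul_distrib]
        congr 1; refine Finset.prod_congr rfl fun i _ => ?_
        rw [mul_pow, ← pow_mul, mul_comm (w i)]
    _ = t ^ m * (coeff α p * ∏ i, x i ^ α i) := by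
        rw [Finset.prod_pow_eq_pow_sum, hdeg]; ring

-- L2: pderiv of homog is homog
lemma IsWeightedHomog.pderiv' {n : ℕ} {p : MvPolynomial (Fin n) ℝ} {w : Fin n → ℕ} {m : ℕ}
    (h : IsWeightedHomog p w m) (i : Fin n) :
    IsWeightedHomog (pderiv i p) w (m - w i) := by
  intro β hβ
  have hrepr : MvPolynomial.pderiv i p
      = ∑ α ∈ p.support, monomial (α - Finsupp.single i 1) (coeff α p * α i) := by
    conv_lhs => rw [p.as_sum, map_sum]
    simp [pderiv_monomial]
  rw [hrepr] at hβ
  obtain ⟨α, hα, hβ'⟩ := Finset.mem_biUnion.mp (MvPolynomial.support_sum hβ)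
  have hαi : α i ≠ 0 := by
    intro h0
    simp [h0, MvPolynomial.support_monomial] at hβ'
  have hβα : β = α - Finsupp.single i 1 := by
    by_cases hc : coeff α p * (α i : ℝ) = 0 <;>
      simp_all [MvPolynomial.support_monomial, hc]
  subst hβα
  have hdeg := h α hα
  have hsplit := Finset.sum_erase_add Finset.univ (fun j => α j * w j) (Finset.mem_univ i)
  have hsplit2 := Finset.sum_erase_add Finset.univ
    (fun j => ((α - Finsupp.single i 1 : Fin n →₀ ℕ)) j * w j) (Finset.mem_univ i)
  have heq : ∑ j ∈ Finset.univ.erase i, ((α - Finsupp.single i 1 : Fin n →₀ ℕ)) j * w j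
      = ∑ j ∈ Finset.univ.erase i, α j * w j := by
    refine Finset.sum_congr rfl fun j hj => ?_
    have hji : j ≠ i := (Finset.mem_erase.mp hj).1
    simp [Finsupp.sub_apply, Finsupp.single_apply, Ne.symm hji]
  have hi' : ((α - Finsupp.single i 1 : Fin n →₀ ℕ)) i = α i - 1 := by
    simp [Finsupp.sub_apply]
  rw [← hsplit2, heq]
  simp only [hi', ← hdeg, ← hsplit]
  have hle : w i ≤ α i * w i := Nat.le_mul_of_pos_left _ (Nat.pos_of_ne_zero hαi)
  have : (α i - 1) * w i = α i * w i - w i := by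
    rw [Nat.sub_one_mul]
  omega

-- L3: X j * p homogeneity
lemma IsWeightedHomog.X_mul {n : ℕ} {p : MvPolynomial (Fin n) ℝ} {w : Fin n → ℕ} {m : ℕ}
    (h : IsWeightedHomog p w m) (j : Fin n) :
    IsWeightedHomog (X j * p) w (m + w j) := by
  intro β hβ
  rw [mem_support_iff, coeff_X_mul'] at hβ
  by_cases hj : j ∈ β.support
  · rw [if_pos hj] at hβ
    have hmem : (β - Finsupp.single j 1 : Fin n →₀ ℕ) ∈ p.support := mem_support_iff.mpr hβ
    have hdeg := h _ hmem
    have hβj : β j ≠ 0 := Finsupp.mem_support_iff.mp hj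
    have hsplit := Finset.sum_erase_add Finset.univ (fun k => β k * w k) (Finset.mem_univ j)
    have hsplit2 := Finset.sum_erase_add Finset.univ
      (fun k => ((β - Finsupp.single j 1 : Fin n →₀ ℕ)) k * w k) (Finset.mem_univ j)
    have heq : ∑ k ∈ Finset.univ.erase j, ((β - Finsupp.single j 1 : Fin n →₀ ℕ)) k * w k
        = ∑ k ∈ Finset.univ.erase j, β k * w k := by
      refine Finset.sum_congr rfl fun k hk => ?_
      have hkj : k ≠ j := (Finset.mem_erase.mp hk).1
      simp [Finsupp.sub_apply, Finsupp.single_apply, Ne.symm hkj]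
    have hj' : ((β - Finsupp.single j 1 : Fin n →₀ ℕ)) j = β j - 1 := by
      simp [Finsupp.sub_apply]
    rw [← hsplit2, heq] at hdeg
    simp only [hj'] at hdeg
    rw [← hsplit]
    simp only [← hdeg]
    have : (β j - 1) * w j = β j * w j - w j := by rw [Nat.sub_one_mul]
    have hle : w j ≤ β j * w j := Nat.le_mul_of_pos_left _ (Nat.pos_of_ne_zero hβj)
    omega
  · rw [if_neg hj] at hβ; exact absurd rfl hβ

-- L6: derivative along the first axis
lemma hasDerivAt_eval_line (p : MvPolynomial (Fin 2) ℝ) (b : ℝ) (s : ℝ) :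
    HasDerivAt (fun z => eval ![z, b] p) (eval ![s, b] (pderiv 0 p)) s := by
  induction p using MvPolynomial.induction_on' with
  | monomial u a =>
    have hfun : (fun z => eval ![z, b] (monomial u a))
        = fun z => (a * b ^ u 1) * z ^ u 0 := by
      funext z
      rw [eval_monomial, Finsupp.prod_fintype _ _ (fun i => pow_zero _), Fin.prod_univ_two]
      simp only [Matrix.cons_val_zero, Matrix.cons_val_one, Matrix.head_cons]
      ring
    rw [hfun]
    have hval : eval ![s, b] (pderiv 0 (monomial u a))
        = (a * b ^ u 1) * (u 0 * s ^ (u 0 - 1)) := by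
      rw [pderiv_monomial, eval_monomial,
        Finsupp.prod_fintype _ _ (fun i => pow_zero _), Fin.prod_univ_two]
      have h0 : ((u - Finsupp.single 0 1 : Fin 2 →₀ ℕ)) 0 = u 0 - 1 := by
        simp [Finsupp.sub_apply]
      have h1 : ((u - Finsupp.single 0 1 : Fin 2 →₀ ℕ)) 1 = u 1 := by
        simp [Finsupp.sub_apply, Finsupp.single_apply]
      simp only [h0, h1, Matrix.cons_val_zero, Matrix.cons_val_one, Matrix.head_cons]
      push_cast
      ring
    rw [hval]
    exact (hasDerivAt_pow (u 0) s).const_mul (a * b ^ u 1)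
  | add p q hp hq =>
    have := hp.add hq
    simp only [map_add]; exact this

-- L4: isolated zero of weighted homogeneous polynomial is global
lemma isolated_global {w₁ w₂ : ℕ} (hw₁ : 0 < w₁) (hw₂ : 0 < w₂)
    {g : MvPolynomial (Fin 2) ℝ} {m : ℕ} (hg : IsWeightedHomog g ![w₁, w₂] m)
    (hiso : ∃ U ∈ nhds (0 : Fin 2 → ℝ), ∀ x ∈ U, eval x g = 0 → x = 0) :
    ∀ x : Fin 2 → ℝ, eval x g = 0 → x = 0 := by
  intro x hx0
  by_contra hxne
  obtain ⟨U, hU, hU2⟩ := hiso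
  set w : Fin 2 → ℕ := ![w₁, w₂] with hwdef
  have hwpos : ∀ i, 0 < w i := by
    intro i; fin_cases i <;> simpa [hwdef]
  have hcont : Continuous (fun t : ℝ => (fun i => t ^ (w i) * x i : Fin 2 → ℝ)) := by
    refine continuous_pi fun i => ?_
    exact (continuous_pow (w i)).mul continuous_const
  have hzero : (fun i => (0:ℝ) ^ (w i) * x i) = (0 : Fin 2 → ℝ) := by
    funext i
    simp [zero_pow (Nat.pos_iff_ne_zero.mp (hwpos i))]
  have htend : Filter.Tendsto (fun t : ℝ => (fun i => t ^ (w i) * x i : Fin 2 → ℝ))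
      (nhds 0) (nhds 0) := by
    have := hcont.continuousAt (x := (0:ℝ))
    rwa [ContinuousAt, hzero] at this
  have hev : ∀ᶠ t : ℝ in nhds 0, (fun i => t ^ (w i) * x i : Fin 2 → ℝ) ∈ U :=
    htend.eventually_mem hU
  have hev' : ∀ᶠ t : ℝ in nhdsWithin 0 (Set.Ioi 0),
      (fun i => t ^ (w i) * x i : Fin 2 → ℝ) ∈ U :=
    hev.filter_mono nhdsWithin_le_nhds
  obtain ⟨t, htU, htpos⟩ := (hev'.and self_mem_nhdsWithin).exists
  have heval : eval (fun i => t ^ (w i) * x i) g = 0 := by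
    rw [homog_eval_scale hg, hx0, mul_zero]
  have := hU2 _ htU heval
  obtain ⟨i, hi⟩ : ∃ i, x i ≠ 0 := by
    by_contra hall
    push_neg at hall
    exact hxne (funext hall)
  have := congrFun this i
  simp only [Pi.zero_apply, mul_eq_zero] at this
  rcases this with h | h
  · exact (pow_ne_zero _ (ne_of_gt (Set.mem_Ioi.mp htpos))) h
  · exact hi h

lemma scale_pair (w₁ w₂ : ℕ) (t a b : ℝ) :
    (fun i : Fin 2 => t ^ (![w₁, w₂] i) * (![a, b] i)) = ![t ^ w₁ * a, t ^ w₂ * b] := by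
  funext i; fin_cases i <;> simp

-- degree bound
lemma deg_ge {d w₁ w₂ : ℕ} (hw : w₂ < w₁) (hd : w₂ < d)
    {φ : MvPolynomial (Fin 2) ℝ} (hhom : IsWeightedHomog φ ![w₁, w₂] (d - w₂))
    (hg_glob : ∀ x : Fin 2 → ℝ, eval x (pderiv 0 φ) = 0 → x = 0) :
    w₁ + w₂ ≤ d := by
  by_contra hlt
  push_neg at hlt
  have hsmall : d - w₂ < w₁ := by omega
  have hzero : (pderiv 0 φ : MvPolynomial (Fin 2) ℝ) = 0 := by
    conv_lhs => rw [φ.as_sum, map_sum]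
    refine Finset.sum_eq_zero fun α hα => ?_
    have hdeg := hhom α hα
    rw [Fin.sum_univ_two] at hdeg
    simp only [Matrix.cons_val_zero, Matrix.cons_val_one, Matrix.head_cons] at hdeg
    have hα0 : α 0 = 0 := by
      by_contra h0
      have : w₁ ≤ α 0 * w₁ := Nat.le_mul_of_pos_left _ (Nat.pos_of_ne_zero h0)
      omega
    rw [pderiv_monomial, hα0]
    simp
  have : (![1, 0] : Fin 2 → ℝ) = 0 := hg_glob _ (by rw [hzero]; simp)
  have := congrFun this 0
  simp at this

-- axis nonvanishing
lemma axis_ne {d w₁ w₂ : ℕ} (hw₁ : 0 < w₁) (hw₂ : 0 < w₂) (hd : w₂ < d)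
    {φ : MvPolynomial (Fin 2) ℝ} (hhom : IsWeightedHomog φ ![w₁, w₂] (d - w₂))
    (hg_glob : ∀ x : Fin 2 → ℝ, eval x (pderiv 0 φ) = 0 → x = 0) :
    ∀ a : ℝ, a ≠ 0 → eval ![a, 0] φ ≠ 0 := by
  have hkey : ∀ e : ℝ, e = 1 ∨ e = -1 → eval ![e, 0] φ ≠ 0 := by
    intro e he hev
    -- q vanishes on the ray through e
    have hray : ∀ z : ℝ, 0 < z → eval ![e * z, 0] φ = 0 := by
      intro z hz
      set t : ℝ := z ^ ((w₁ : ℝ))⁻¹ with htdef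
      have htpos : 0 < t := Real.rpow_pos_of_pos hz _
      have htw : t ^ w₁ = z := by
        rw [htdef, ← Real.rpow_natCast (z ^ ((w₁:ℝ))⁻¹) w₁, ← Real.rpow_mul hz.le,
          inv_mul_cancel₀ (by exact_mod_cast hw₁.ne'), Real.rpow_one]
      have := homog_eval_scale hhom t ![e, 0]
      rw [scale_pair] at this
      simp only [mul_zero, htw] at this
      calc eval ![e * z, 0] φ = eval ![z * e, 0] φ := by rw [mul_comm]
        _ = t ^ (d - w₂) * eval ![e, 0] φ := by rw [← htw] at this ⊢; exact this
        _ = 0 := by rw [hev, mul_zero]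
    have hne : e ≠ 0 := by rcases he with rfl | rfl <;> norm_num
    -- q is eventually 0 near e
    have hevq : (fun z : ℝ => eval ![z, 0] φ) =ᶠ[nhds e] fun _ => (0:ℝ) := by
      have hmem : {z : ℝ | 0 < e * z} ∈ nhds e := by
        have : IsOpen {z : ℝ | 0 < e * z} := isOpen_lt continuous_const (continuous_const.mul continuous_id)
        refine this.mem_nhds ?_
        rcases he with rfl | rfl <;> norm_num
      refine Filter.eventually_of_mem hmem fun z hz => ?_
      have := hray (e * z) hz
      have hez : e * (e * z) = z := by rcases he with rfl | rfl <;> ring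
      rwa [hez] at this
    have hD := hasDerivAt_eval_line φ 0 e
    have hD0 : HasDerivAt (fun _ : ℝ => (0:ℝ)) (eval ![e, 0] (pderiv 0 φ)) e :=
      hD.congr_of_eventuallyEq hevq.symm
    have : eval ![e, 0] (pderiv 0 φ) = 0 := hD0.unique (hasDerivAt_const e 0)
    have h2 := hg_glob _ this
    have := congrFun h2 0
    simp [hne] at this
  intro a ha hev
  rcases lt_or_gt_of_ne ha with hneg | hpos
  · set t : ℝ := (-a) ^ ((w₁ : ℝ))⁻¹ with htdef
    have htpos : 0 < t := Real.rpow_pos_of_pos (by linarith) _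
    have htw : t ^ w₁ = -a := by
      rw [htdef, ← Real.rpow_natCast ((-a) ^ ((w₁:ℝ))⁻¹) w₁, ← Real.rpow_mul (by linarith),
        inv_mul_cancel₀ (by exact_mod_cast hw₁.ne'), Real.rpow_one]
    have := homog_eval_scale hhom t ![-1, 0]
    rw [scale_pair] at this
    simp only [mul_zero, htw] at this
    rw [show (-a) * (-1 : ℝ) = a by ring, hev] at this
    exact hkey (-1) (Or.inr rfl) (by
      have h3 : t ^ (d - w₂) * eval ![(-1:ℝ), 0] φ = 0 := this.symm
      rcases mul_eq_zero.mp h3 with h | h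
      · exact absurd h (pow_ne_zero _ htpos.ne')
      · exact h)
  · set t : ℝ := a ^ ((w₁ : ℝ))⁻¹ with htdef
    have htpos : 0 < t := Real.rpow_pos_of_pos hpos _
    have htw : t ^ w₁ = a := by
      rw [htdef, ← Real.rpow_natCast (a ^ ((w₁:ℝ))⁻¹) w₁, ← Real.rpow_mul hpos.le,
        inv_mul_cancel₀ (by exact_mod_cast hw₁.ne'), Real.rpow_one]
    have := homog_eval_scale hhom t ![1, 0]
    rw [scale_pair] at this
    simp only [mul_zero, mul_one, htw] at this
    rw [hev] at this
    exact hkey 1 (Or.inl rfl) (by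
      have h3 : t ^ (d - w₂) * eval ![(1:ℝ), 0] φ = 0 := this.symm
      rcases mul_eq_zero.mp h3 with h | h
      · exact absurd h (pow_ne_zero _ htpos.ne')
      · exact h)



lemma rho_sum_nonneg {n : ℕ} (w : Fin n → ℕ) (x : Fin n → ℝ) :
    0 ≤ ∑ i, |x i| ^ ((2 : ℝ) / (w i : ℝ)) :=
  Finset.sum_nonneg fun i _ => Real.rpow_nonneg (abs_nonneg _) _

lemma rho_scale {n : ℕ} {w : Fin n → ℕ} (hw : ∀ i, 0 < w i) {t : ℝ} (ht : 0 < t)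
    (x : Fin n → ℝ) : rho w (fun i => t ^ (w i) * x i) = t * rho w x := by
  unfold rho
  have : ∀ i : Fin n, |t ^ w i * x i| ^ ((2:ℝ) / (w i : ℝ))
      = t ^ (2:ℝ) * |x i| ^ ((2:ℝ) / (w i : ℝ)) := by
    intro i
    rw [abs_mul, abs_of_pos (pow_pos ht _),
      Real.mul_rpow (pow_pos ht _).le (abs_nonneg _)]
    congr 1
    rw [← Real.rpow_natCast t (w i), ← Real.rpow_mul ht.le]
    congr 1
    have hwne : ((w i : ℕ) : ℝ) ≠ 0 := Nat.cast_ne_zero.mpr (hw i).ne'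
    field_simp
  simp_rw [this, ← Finset.mul_sum]
  rw [Real.sqrt_mul (Real.rpow_nonneg ht.le _), Real.rpow_two,
    Real.sqrt_sq ht.le]

lemma rho_pos {n : ℕ} (w : Fin n → ℕ) {x : Fin n → ℝ} (hx : x ≠ 0) :
    0 < rho w x := by
  obtain ⟨i, hi⟩ : ∃ i, x i ≠ 0 := by
    by_contra hall; push_neg at hall; exact hx (funext hall)
  unfold rho
  rw [Real.sqrt_pos]
  have h1 : (0:ℝ) < |x i| ^ ((2:ℝ) / (w i : ℝ)) :=
    Real.rpow_pos_of_pos (abs_pos.mpr hi) _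
  have h2 : |x i| ^ ((2:ℝ) / (w i : ℝ)) ≤ ∑ j, |x j| ^ ((2:ℝ) / (w j : ℝ)) :=
    Finset.single_le_sum (f := fun j => |x j| ^ ((2:ℝ) / (w j : ℝ)))
      (fun j _ => Real.rpow_nonneg (abs_nonneg _) _) (Finset.mem_univ i)
  linarith

lemma rho_term_le {n : ℕ} {w : Fin n → ℕ} {x : Fin n → ℝ} (h : rho w x = 1) (i : Fin n) :
    |x i| ^ ((2:ℝ) / (w i : ℝ)) ≤ 1 := by
  have hsum : ∑ j, |x j| ^ ((2:ℝ) / (w j : ℝ)) = 1 := by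
    rw [rho] at h
    exact Real.sqrt_eq_one.mp h
  rw [← hsum]
  exact Finset.single_le_sum (f := fun j => |x j| ^ ((2:ℝ) / (w j : ℝ)))
    (fun j _ => Real.rpow_nonneg (abs_nonneg _) _) (Finset.mem_univ i)

lemma abs_le_one_of_rho_eq_one {n : ℕ} {w : Fin n → ℕ} (hw : ∀ i, 0 < w i)
    {x : Fin n → ℝ} (h : rho w x = 1) (i : Fin n) : |x i| ≤ 1 := by
  have hterm := rho_term_le h i
  by_contra hgt
  push_neg at hgt
  have : (1:ℝ) < |x i| ^ ((2:ℝ) / (w i : ℝ)) := by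
    apply Real.one_lt_rpow_iff_of_pos (by linarith) |>.mpr
    have hwpos : (0:ℝ) < (w i : ℝ) := by exact_mod_cast hw i
    exact Or.inl ⟨hgt, by positivity⟩
  linarith

lemma abs_le_eNorm {n : ℕ} (x : Fin n → ℝ) (i : Fin n) : |x i| ≤ eNorm x := by
  have h : (x i) ^ 2 ≤ ∑ j, (x j) ^ 2 :=
    Finset.single_le_sum (f := fun j => (x j) ^ 2) (fun j _ => sq_nonneg _) (Finset.mem_univ i)
  calc |x i| = Real.sqrt ((x i) ^ 2) := (Real.sqrt_sq_eq_abs _).symm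
    _ ≤ eNorm x := Real.sqrt_le_sqrt h

lemma eNorm_le_add (x : Fin 2 → ℝ) : eNorm x ≤ |x 0| + |x 1| := by
  rw [eNorm, Fin.sum_univ_two]
  rw [show x 0 ^ 2 + x 1 ^ 2 = |x 0| ^ 2 + |x 1| ^ 2 by simp [sq_abs]]
  have h := Real.sqrt_le_sqrt (show |x 0| ^ 2 + |x 1| ^ 2 ≤ (|x 0| + |x 1|) ^ 2 by nlinarith [abs_nonneg (x 0), abs_nonneg (x 1)])
  calc Real.sqrt (|x 0| ^ 2 + |x 1| ^ 2) ≤ Real.sqrt ((|x 0| + |x 1|) ^ 2) := h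
    _ = |x 0| + |x 1| := Real.sqrt_sq (by positivity)

lemma eNorm_nonneg {n : ℕ} (x : Fin n → ℝ) : 0 ≤ eNorm x := Real.sqrt_nonneg _

-- lower bound for eNorm on the weighted sphere
lemma eNorm_ge_of_rho_eq_one {w₁ w₂ : ℕ} (hw₂ : 0 < w₂) (hw : w₂ ≤ w₁)
    {x : Fin 2 → ℝ} (h : rho ![w₁, w₂] x = 1) :
    (2:ℝ) ^ (-(w₁:ℝ)/2) ≤ eNorm x := by
  have hw₁ : 0 < w₁ := lt_of_lt_of_le hw₂ hw
  have hsum : ∑ j, |x j| ^ ((2:ℝ) / ((![w₁, w₂] j : ℕ) : ℝ)) = 1 := by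
    rw [rho] at h
    exact Real.sqrt_eq_one.mp h
  rw [Fin.sum_univ_two] at hsum
  -- one of the two terms is ≥ 1/2
  have hhalf : ∃ i : Fin 2, (1:ℝ)/2 ≤ |x i| ^ ((2:ℝ) / ((![w₁, w₂] i : ℕ) : ℝ)) := by
    by_contra hc
    push_neg at hc
    have h0 := hc 0
    have h1 := hc 1
    linarith
  obtain ⟨i, hi⟩ := hhalf
  set wi : ℕ := ![w₁, w₂] i with hwi
  have hwipos : 0 < wi := by fin_cases i <;> simp [hwi] <;> omega
  have hwile : wi ≤ w₁ := by fin_cases i <;> simp [hwi] <;> omega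
  -- raise to the power wi/2
  have habs : (2:ℝ) ^ (-(wi:ℝ)/2) ≤ |x i| := by
    have hxpos : 0 < |x i| := by
      by_contra hc
      push_neg at hc
      have : |x i| = 0 := le_antisymm hc (abs_nonneg _)
      rw [this, Real.zero_rpow (by positivity)] at hi
      linarith
    have h2 : ((1:ℝ)/2) ^ ((wi:ℝ)/2) ≤ (|x i| ^ ((2:ℝ) / (wi:ℝ))) ^ ((wi:ℝ)/2) :=
      Real.rpow_le_rpow (by norm_num) hi (by positivity)
    rw [← Real.rpow_mul (abs_nonneg _), show (2:ℝ)/(wi:ℝ) * ((wi:ℝ)/2) = 1 by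
        have hwne : ((wi:ℕ):ℝ) ≠ 0 := Nat.cast_ne_zero.mpr hwipos.ne'
        field_simp, Real.rpow_one] at h2
    calc (2:ℝ) ^ (-(wi:ℝ)/2) = ((1:ℝ)/2) ^ ((wi:ℝ)/2) := by
          rw [one_div, Real.inv_rpow (by norm_num : (0:ℝ) ≤ 2),
            ← Real.rpow_neg (by norm_num : (0:ℝ) ≤ 2), neg_div]
      _ ≤ |x i| := h2
  calc (2:ℝ) ^ (-(w₁:ℝ)/2) ≤ (2:ℝ) ^ (-(wi:ℝ)/2) := by
        apply Real.rpow_le_rpow_of_exponent_le (by norm_num)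
        have : (wi:ℝ) ≤ (w₁:ℝ) := Nat.cast_le.mpr hwile
        linarith
    _ ≤ |x i| := habs
    _ ≤ eNorm x := abs_le_eNorm x i

lemma rho_le_of_eNorm_le {w₁ w₂ : ℕ} (hw₂ : 0 < w₂) (hw : w₂ ≤ w₁) {t₀ : ℝ} (ht₀ : 0 < t₀) :
    ∃ δ > (0:ℝ), ∀ x : Fin 2 → ℝ, eNorm x ≤ δ → rho ![w₁, w₂] x ≤ t₀ := by
  have hw₁ : 0 < w₁ := lt_of_lt_of_le hw₂ hw
  set c : ℝ := min 1 (t₀ ^ 2 / 2) with hcdef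
  have hc0 : 0 < c := lt_min one_pos (by positivity)
  have hc1 : c ≤ 1 := min_le_left _ _
  refine ⟨c ^ ((w₁:ℝ)/2), Real.rpow_pos_of_pos hc0 _, fun x hx => ?_⟩
  have hterm : ∀ i : Fin 2, |x i| ^ ((2:ℝ) / ((![w₁, w₂] i : ℕ) : ℝ)) ≤ c := by
    intro i
    set wi : ℕ := ![w₁, w₂] i with hwi
    have hwipos : 0 < wi := by fin_cases i <;> simp [hwi] <;> omega
    have hwile : wi ≤ w₁ := by fin_cases i <;> simp [hwi] <;> omega
    have h1 : |x i| ≤ c ^ ((w₁:ℝ)/2) := le_trans (abs_le_eNorm x i) hx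
    have h2 : |x i| ^ ((2:ℝ)/(wi:ℝ)) ≤ (c ^ ((w₁:ℝ)/2)) ^ ((2:ℝ)/(wi:ℝ)) :=
      Real.rpow_le_rpow (abs_nonneg _) h1 (by positivity)
    have h3 : (c ^ ((w₁:ℝ)/2)) ^ ((2:ℝ)/(wi:ℝ)) = c ^ ((w₁:ℝ)/(wi:ℝ)) := by
      rw [← Real.rpow_mul hc0.le]
      congr 1
      field_simp
    have h4 : c ^ ((w₁:ℝ)/(wi:ℝ)) ≤ c ^ (1:ℝ) := by
      apply Real.rpow_le_rpow_of_exponent_ge hc0 hc1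
      rw [le_div_iff₀ (by exact_mod_cast hwipos)]
      simp only [one_mul]
      exact_mod_cast hwile
    rw [Real.rpow_one] at h4
    calc |x i| ^ ((2:ℝ)/(wi:ℝ)) ≤ (c ^ ((w₁:ℝ)/2)) ^ ((2:ℝ)/(wi:ℝ)) := h2
      _ = c ^ ((w₁:ℝ)/(wi:ℝ)) := h3
      _ ≤ c := h4
  have hsum : ∑ i, |x i| ^ ((2:ℝ) / ((![w₁, w₂] i : ℕ) : ℝ)) ≤ t₀ ^ 2 := by
    rw [Fin.sum_univ_two]
    have h0 := hterm 0
    have h1 := hterm 1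
    have : c ≤ t₀ ^ 2 / 2 := min_le_right _ _
    linarith
  rw [rho]
  calc Real.sqrt (∑ i, |x i| ^ ((2:ℝ) / ((![w₁, w₂] i : ℕ) : ℝ)))
      ≤ Real.sqrt (t₀ ^ 2) := Real.sqrt_le_sqrt hsum
    _ = t₀ := Real.sqrt_sq ht₀.le

lemma continuous_eNorm {n : ℕ} : Continuous (eNorm : (Fin n → ℝ) → ℝ) :=
  Real.continuous_sqrt.comp (continuous_finset_sum _ fun i _ => (continuous_apply i).pow 2)

lemma isCompact_annulus {r R : ℝ} (hR : 0 ≤ R) :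
    IsCompact {u : Fin 2 → ℝ | r ≤ eNorm u ∧ eNorm u ≤ R} := by
  apply Metric.isCompact_of_isClosed_isBounded
  · exact (isClosed_le continuous_const continuous_eNorm).inter
      (isClosed_le continuous_eNorm continuous_const)
  · apply Bornology.IsBounded.subset (Metric.isBounded_closedBall (x := (0 : Fin 2 → ℝ)) (r := R))
    intro u hu
    rw [Metric.mem_closedBall, dist_zero_right]
    rw [pi_norm_le_iff_of_nonneg hR]
    intro i
    calc ‖u i‖ = |u i| := rfl
      _ ≤ eNorm u := abs_le_eNorm u i
      _ ≤ R := hu.2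

lemma eNorm_one_zero : eNorm ![(1:ℝ), 0] = 1 := by
  rw [eNorm, Fin.sum_univ_two]
  norm_num

lemma exists_min_annulus {r R : ℝ} (hr : 0 < r) (hr1 : r ≤ 1) (hR : 1 ≤ R)
    (F : (Fin 2 → ℝ) → ℝ) (hF : Continuous F) (hne : ∀ u : Fin 2 → ℝ, u ≠ 0 → F u ≠ 0) :
    ∃ m > (0:ℝ), ∀ u : Fin 2 → ℝ, r ≤ eNorm u → eNorm u ≤ R → m ≤ |F u| := by
  have hA : IsCompact {u : Fin 2 → ℝ | r ≤ eNorm u ∧ eNorm u ≤ R} :=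
    isCompact_annulus (by linarith)
  have hAne : {u : Fin 2 → ℝ | r ≤ eNorm u ∧ eNorm u ≤ R}.Nonempty :=
    ⟨![1, 0], by rw [Set.mem_setOf_eq, eNorm_one_zero]; exact ⟨hr1, hR⟩⟩
  obtain ⟨u₀, hu₀A, hu₀min⟩ := hA.exists_isMinOn hAne (hF.abs.continuousOn)
  refine ⟨|F u₀|, ?_, fun u h1 h2 => hu₀min ⟨h1, h2⟩⟩
  have : u₀ ≠ 0 := by
    intro h0
    rw [h0] at hu₀A
    have : eNorm (0 : Fin 2 → ℝ) = 0 := by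
      rw [eNorm]; simp
    have h1 : r ≤ eNorm (0 : Fin 2 → ℝ) := hu₀A.1
    rw [this] at h1
    linarith
  exact abs_pos.mpr (hne u₀ this)

lemma exists_delta_min {r R : ℝ} (hr : 0 < r) (hr1 : r ≤ 1) (hR : 1 ≤ R)
    (F : (Fin 2 → ℝ) → ℝ) (hF : Continuous F)
    (hax : ∀ u : Fin 2 → ℝ, r ≤ eNorm u → eNorm u ≤ R → u 1 = 0 → F u ≠ 0) :
    ∃ δ > (0:ℝ), ∃ m > (0:ℝ), ∀ u : Fin 2 → ℝ,
      r ≤ eNorm u → eNorm u ≤ R → |u 1| ≤ δ → m ≤ |F u| := by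
  set A : Set (Fin 2 → ℝ) := {u | r ≤ eNorm u ∧ eNorm u ≤ R} with hAdef
  have hA : IsCompact A := isCompact_annulus (by linarith)
  set K : Set (Fin 2 → ℝ) := A ∩ {u | u 1 = 0} with hKdef
  have hK : IsCompact K :=
    hA.inter_right (isClosed_eq (continuous_apply 1) continuous_const)
  have hKne : K.Nonempty := by
    refine ⟨![1, 0], ⟨?_, ?_⟩⟩
    · rw [hAdef, Set.mem_setOf_eq, eNorm_one_zero]; exact ⟨hr1, hR⟩
    · simp
  obtain ⟨u₀, hu₀K, hu₀min⟩ := hK.exists_isMinOn hKne (hF.abs.continuousOn)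
  set μ : ℝ := |F u₀| with hμdef
  have hμpos : 0 < μ := abs_pos.mpr (hax u₀ hu₀K.1.1 hu₀K.1.2 hu₀K.2)
  set Z : Set (Fin 2 → ℝ) := A ∩ {u | |F u| ≤ μ/2} with hZdef
  have hZc : IsCompact Z := hA.inter_right (isClosed_le hF.abs continuous_const)
  rcases Set.eq_empty_or_nonempty Z with hZe | hZne
  · refine ⟨1, one_pos, μ/2, by linarith, fun u h1 h2 _ => ?_⟩
    by_contra hc
    push_neg at hc
    have : u ∈ Z := ⟨⟨h1, h2⟩, le_of_lt hc⟩
    rw [hZe] at this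
    exact this
  · obtain ⟨z, hzZ, hzmin⟩ := hZc.exists_isMinOn hZne
      ((continuous_abs.comp (continuous_apply 1)).continuousOn)
    have hz1 : z 1 ≠ 0 := by
      intro h0
      have hzK : z ∈ K := ⟨hzZ.1, h0⟩
      have h1 := hu₀min hzK
      have h2 := hzZ.2
      simp only [Set.mem_setOf_eq] at h2
      have : μ ≤ |F z| := h1
      linarith
    refine ⟨|z 1| / 2, by positivity, μ/2, by linarith, fun u h1 h2 h3 => ?_⟩
    by_contra hc
    push_neg at hc
    have huZ : u ∈ Z := ⟨⟨h1, h2⟩, le_of_lt hc⟩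
    have := hzmin huZ
    simp only [Function.comp] at this
    have habs : |z 1| ≤ |u 1| := this
    have : 0 < |z 1| := abs_pos.mpr hz1
    linarith


lemma abs_le_sqrt_left (a b : ℝ) : |a| ≤ Real.sqrt (a ^ 2 + b ^ 2) := by
  rw [← Real.sqrt_sq_eq_abs]
  exact Real.sqrt_le_sqrt (by nlinarith)

lemma abs_le_sqrt_right (a b : ℝ) : |b| ≤ Real.sqrt (a ^ 2 + b ^ 2) := by
  rw [← Real.sqrt_sq_eq_abs]
  exact Real.sqrt_le_sqrt (by nlinarith)


theorem stmt8 (d w₁ w₂ : ℕ) (hw₂ : 0 < w₂) (hw : w₂ < w₁) (hd : w₂ < d)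
    (φ : MvPolynomial (Fin 2) ℝ)
    (hhom : IsWeightedHomog φ ![w₁, w₂] (d - w₂))
    (hiso : ∃ U ∈ nhds (0 : Fin 2 → ℝ), ∀ x ∈ U,
      eval x (pderiv 0 φ) = 0 → x = 0)
    (f : MvPolynomial (Fin 2) ℝ) (hf : f = X 1 * φ) :
    ∃ C > (0 : ℝ), ∃ U ∈ nhds (0 : Fin 2 → ℝ), ∀ x ∈ U,
      C * eNorm x ^ (((d : ℝ) - w₁) / w₂) ≤ gradNorm f x := by
  subst hf
  have hw₁ : 0 < w₁ := lt_trans hw₂ hw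
  have hwpos : ∀ i : Fin 2, 0 < (![w₁, w₂] : Fin 2 → ℕ) i := by
    intro i; fin_cases i <;> simpa
  -- global isolated zero
  have hg_glob : ∀ x : Fin 2 → ℝ, eval x (pderiv 0 φ) = 0 → x = 0 :=
    isolated_global hw₁ hw₂ (hhom.pderiv' 0) hiso
  have hdge : w₁ + w₂ ≤ d := deg_ge hw hd hhom hg_glob
  have haxis := axis_ne hw₁ hw₂ hd hhom hg_glob
  -- homogeneity of f and its derivatives
  have hfhom : IsWeightedHomog (X 1 * φ) ![w₁, w₂] d := by
    have h := hhom.X_mul 1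
    have h2 : (d - w₂) + (![w₁, w₂] : Fin 2 → ℕ) 1 = d := by
      simp only [Matrix.cons_val_one, Matrix.head_cons, Matrix.cons_val_zero]
      omega
    rwa [h2] at h
  have hp0 : IsWeightedHomog (pderiv 0 (X 1 * φ)) ![w₁, w₂] (d - w₁) := by
    have h := hfhom.pderiv' 0
    have h2 : d - (![w₁, w₂] : Fin 2 → ℕ) 0 = d - w₁ := by
      simp only [Matrix.cons_val_zero]
    rwa [h2] at h
  have hp1 : IsWeightedHomog (pderiv 1 (X 1 * φ)) ![w₁, w₂] (d - w₂) := by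
    have h := hfhom.pderiv' 1
    have h2 : d - (![w₁, w₂] : Fin 2 → ℕ) 1 = d - w₂ := by
      simp only [Matrix.cons_val_one, Matrix.head_cons, Matrix.cons_val_zero]
    rwa [h2] at h
  have hp0eq : pderiv 0 (X 1 * φ) = X 1 * pderiv 0 φ := by
    rw [pderiv_mul, pderiv_X_of_ne (show (1 : Fin 2) ≠ 0 by decide)]
    ring
  have hp1eq : pderiv 1 (X 1 * φ) = φ + X 1 * pderiv 1 φ := by
    rw [pderiv_mul, pderiv_X_self, one_mul]
  -- constants from compactness
  set r : ℝ := (2:ℝ) ^ (-(w₁:ℝ)/2) with hrdef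
  have hr : 0 < r := Real.rpow_pos_of_pos (by norm_num) _
  have hr1 : r ≤ 1 := Real.rpow_le_one_of_one_le_of_nonpos (by norm_num)
    (by
    have : (0:ℝ) ≤ (w₁:ℝ)/2 := by positivity
    linarith)
  obtain ⟨m₁, hm₁, hm₁min⟩ := exists_min_annulus hr hr1 (by norm_num : (1:ℝ) ≤ 2)
    (fun u => eval u (pderiv 0 φ)) (MvPolynomial.continuous_eval _)
    (fun u hu h => hu (hg_glob u h))
  obtain ⟨δ, hδ, m₂, hm₂, hm₂min⟩ := exists_delta_min hr hr1 (by norm_num : (1:ℝ) ≤ 2)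
    (fun u => eval u (pderiv 1 (X 1 * φ))) (MvPolynomial.continuous_eval _)
    (by
      intro u h1 h2 h3 hcon0
      have hcon : eval u (pderiv 1 (X 1 * φ)) = 0 := hcon0
      have hu' : u = ![u 0, 0] := by
        funext i; fin_cases i <;> simp [h3]
      have hu0 : u 0 ≠ 0 := by
        intro h0
        have : u = 0 := by
          funext i; fin_cases i <;> simp [h0, h3]
        rw [this] at h1
        have : eNorm (0 : Fin 2 → ℝ) = 0 := by rw [eNorm]; simp
        rw [this] at h1
        linarith
      apply haxis (u 0) hu0
      have : eval u (pderiv 1 (X 1 * φ)) = eval u φ + u 1 * eval u (pderiv 1 φ) := by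
        rw [hp1eq, map_add, eval_mul, eval_X]
      rw [this, h3, zero_mul, add_zero] at hcon
      rwa [← hu'])
  -- exponent facts
  set lam : ℝ := ((d : ℝ) - w₁) / w₂ with hlamdef
  have hw₂R : (0:ℝ) < (w₂:ℝ) := by exact_mod_cast hw₂
  have hlam1 : 1 ≤ lam := by
    rw [hlamdef, le_div_iff₀ hw₂R]
    have : (w₁:ℝ) + w₂ ≤ d := by exact_mod_cast hdge
    linarith
  have hlampos : 0 < lam := lt_of_lt_of_le one_pos hlam1
  have hlamw₂ : (w₂:ℝ) * lam = (d:ℝ) - w₁ := by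
    rw [hlamdef]; field_simp
  have hlamw₁ : (d:ℝ) - w₂ ≤ (w₁:ℝ) * lam := by
    have hc : (w₁:ℝ) + w₂ ≤ d := by exact_mod_cast hdge
    have hc2 : (w₂:ℝ) < w₁ := by exact_mod_cast hw
    have key : (0:ℝ) ≤ ((w₁:ℝ) - w₂) * ((d:ℝ) - w₁ - w₂) :=
      mul_nonneg (by linarith) (by linarith)
    rw [hlamdef, ← mul_div_assoc, le_div_iff₀ hw₂R]
    nlinarith
  -- threshold t₀
  set δ' : ℝ := min δ 1 with hδ'def
  have hδ'0 : 0 < δ' := lt_min hδ one_pos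
  have hδ'1 : δ' ≤ 1 := min_le_right _ _
  have hwne : ((w₁ - w₂ : ℕ) : ℝ) ≠ 0 := by
    have : 0 < w₁ - w₂ := by omega
    exact_mod_cast this.ne'
  set t₀ : ℝ := δ' ^ ((1:ℝ) / ((w₁ - w₂ : ℕ) : ℝ)) with ht₀def
  have ht₀pos : 0 < t₀ := Real.rpow_pos_of_pos hδ'0 _
  have ht₀le1 : t₀ ≤ 1 := Real.rpow_le_one hδ'0.le hδ'1 (by positivity)
  have ht₀pow : t₀ ^ (w₁ - w₂ : ℕ) ≤ δ := by
    have : t₀ ^ (w₁ - w₂ : ℕ) = δ' := by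
      rw [ht₀def, ← Real.rpow_natCast (δ' ^ ((1:ℝ) / ((w₁ - w₂:ℕ):ℝ))) (w₁ - w₂),
        ← Real.rpow_mul hδ'0.le, one_div, inv_mul_cancel₀ hwne, Real.rpow_one]
    rw [this]
    exact min_le_left _ _
  obtain ⟨ε, hε, hεrho⟩ := rho_le_of_eNorm_le hw₂ hw.le ht₀pos
  -- constants
  have h2lam : (0:ℝ) < 2 ^ lam := Real.rpow_pos_of_pos (by norm_num) _
  set C : ℝ := min (m₁ / 2 ^ lam) (m₂ / 2 ^ lam) with hCdef
  have hC : 0 < C := lt_min (by positivity) (by positivity)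
  refine ⟨C, hC, Metric.ball 0 (ε/2), Metric.ball_mem_nhds _ (by positivity), ?_⟩
  intro x hxU
  have hxε : eNorm x ≤ ε := by
    have hd0 : dist x 0 < ε/2 := Metric.mem_ball.mp hxU
    rw [dist_zero_right] at hd0
    have h0 : |x 0| ≤ ‖x‖ := by
      have := norm_le_pi_norm x 0
      simpa using this
    have h1 : |x 1| ≤ ‖x‖ := by
      have := norm_le_pi_norm x 1
      simpa using this
    calc eNorm x ≤ |x 0| + |x 1| := eNorm_le_add x
      _ ≤ ‖x‖ + ‖x‖ := add_le_add h0 h1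
      _ ≤ ε := by linarith
  rcases eq_or_ne x 0 with rfl | hx0
  · have he0 : eNorm (0 : Fin 2 → ℝ) = 0 := by rw [eNorm]; simp
    rw [he0, Real.zero_rpow hlampos.ne', mul_zero]
    exact Real.sqrt_nonneg _
  · -- the weighted radius
    set t : ℝ := rho ![w₁, w₂] x with htdef
    have ht : 0 < t := rho_pos _ hx0
    have htle : t ≤ t₀ := hεrho x hxε
    have ht1 : t ≤ 1 := le_trans htle ht₀le1
    -- rescaled point on the weighted sphere
    set u : Fin 2 → ℝ := fun i => (t ^ ((![w₁, w₂] : Fin 2 → ℕ) i))⁻¹ * x i with hudef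
    have hx_eq : (fun i => t ^ ((![w₁, w₂] : Fin 2 → ℕ) i) * u i) = x := by
      funext i
      rw [hudef]
      field_simp
    have hρu : rho ![w₁, w₂] u = 1 := by
      have := rho_scale hwpos ht u
      rw [hx_eq, ← htdef] at this
      have := this.symm
      field_simp at this
      exact this
    have hu0 : |u 0| ≤ 1 := abs_le_one_of_rho_eq_one hwpos hρu 0
    have hu1 : |u 1| ≤ 1 := abs_le_one_of_rho_eq_one hwpos hρu 1
    have huA1 : r ≤ eNorm u := eNorm_ge_of_rho_eq_one hw₂ hw.le hρu
    have huA2 : eNorm u ≤ 2 := by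
      calc eNorm u ≤ |u 0| + |u 1| := eNorm_le_add u
        _ ≤ 2 := by linarith
    -- scaled evaluations
    have he0 : eval x (pderiv 0 (X 1 * φ)) = t ^ (d - w₁) * eval u (pderiv 0 (X 1 * φ)) := by
      conv_lhs => rw [← hx_eq]
      exact homog_eval_scale hp0 t u
    have he1 : eval x (pderiv 1 (X 1 * φ)) = t ^ (d - w₂) * eval u (pderiv 1 (X 1 * φ)) := by
      conv_lhs => rw [← hx_eq]
      exact homog_eval_scale hp1 t u
    have hg0u : eval u (pderiv 0 (X 1 * φ)) = u 1 * eval u (pderiv 0 φ) := by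
      rw [hp0eq, eval_mul, eval_X]
    -- grad norm lower bounds
    have hgrad : gradNorm (X 1 * φ) x
        = Real.sqrt ((eval x (pderiv 0 (X 1 * φ))) ^ 2 + (eval x (pderiv 1 (X 1 * φ))) ^ 2) := by
      rw [gradNorm, Fin.sum_univ_two]
    have hgrad0 : |eval x (pderiv 0 (X 1 * φ))| ≤ gradNorm (X 1 * φ) x := by
      rw [hgrad]; exact abs_le_sqrt_left _ _
    have hgrad1 : |eval x (pderiv 1 (X 1 * φ))| ≤ gradNorm (X 1 * φ) x := by
      rw [hgrad]; exact abs_le_sqrt_right _ _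
    -- coordinates of x
    have hx0c : x 0 = t ^ w₁ * u 0 := by
      have := congrFun hx_eq 0
      simpa using this.symm
    have hx1c : x 1 = t ^ w₂ * u 1 := by
      have := congrFun hx_eq 1
      simpa using this.symm
    have htww : t ^ w₂ * t ^ (w₁ - w₂ : ℕ) = t ^ w₁ := by
      rw [← pow_add]
      congr 1
      omega
    -- power conversions
    have hcast0 : ((d - w₁ : ℕ) : ℝ) = (d:ℝ) - w₁ := by
      rw [Nat.cast_sub (by omega)]
    have hcast1 : ((d - w₂ : ℕ) : ℝ) = (d:ℝ) - w₂ := by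
      rw [Nat.cast_sub (by omega)]
    have hpow0 : t ^ (d - w₁ : ℕ) = t ^ ((d:ℝ) - (w₁:ℝ)) := by
      rw [← hcast0, Real.rpow_natCast]
    have hpow1 : t ^ (d - w₂ : ℕ) = t ^ ((d:ℝ) - (w₂:ℝ)) := by
      rw [← hcast1, Real.rpow_natCast]
    rcases le_or_gt (t ^ (w₁ - w₂ : ℕ)) (|u 1|) with hcase | hcase
    · -- case (i): second coordinate dominates
      have hu1pos : 0 < |u 1| := lt_of_lt_of_le (pow_pos ht _) hcase
      have hm₁u : m₁ ≤ |eval u (pderiv 0 φ)| := hm₁min u huA1 huA2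
      have hxb : eNorm x ≤ 2 * (t ^ w₂ * |u 1|) := by
        have hb0 : |x 0| ≤ t ^ w₂ * |u 1| := by
          rw [hx0c, abs_mul, abs_of_pos (pow_pos ht w₁)]
          calc t ^ w₁ * |u 0| ≤ t ^ w₁ * 1 := by
                apply mul_le_mul_of_nonneg_left hu0 (pow_pos ht w₁).le
            _ = t ^ w₂ * t ^ (w₁ - w₂ : ℕ) := by rw [mul_one, htww]
            _ ≤ t ^ w₂ * |u 1| := by
                apply mul_le_mul_of_nonneg_left hcase (pow_pos ht w₂).le
        have hb1 : |x 1| = t ^ w₂ * |u 1| := by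
          rw [hx1c, abs_mul, abs_of_pos (pow_pos ht w₂)]
        calc eNorm x ≤ |x 0| + |x 1| := eNorm_le_add x
          _ ≤ 2 * (t ^ w₂ * |u 1|) := by rw [hb1]; linarith
      have hrpow : eNorm x ^ lam ≤ 2 ^ lam * (t ^ ((d:ℝ) - (w₁:ℝ)) * |u 1|) := by
        have h1 : eNorm x ^ lam ≤ (2 * (t ^ w₂ * |u 1|)) ^ lam :=
          Real.rpow_le_rpow (eNorm_nonneg x) hxb hlampos.le
        have h2 : (2 * (t ^ w₂ * |u 1|) : ℝ) ^ lam
            = 2 ^ lam * ((t ^ w₂ : ℝ) ^ lam * |u 1| ^ lam) := by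
          rw [Real.mul_rpow (by norm_num) (by positivity),
            Real.mul_rpow (pow_pos ht w₂).le (abs_nonneg _)]
        have h3 : ((t ^ w₂ : ℝ)) ^ lam = t ^ ((d:ℝ) - (w₁:ℝ)) := by
          rw [← Real.rpow_natCast t w₂, ← Real.rpow_mul ht.le, hlamw₂]
        have h4 : |u 1| ^ lam ≤ |u 1| := by
          have := Real.rpow_le_rpow_of_exponent_ge hu1pos hu1 hlam1
          rwa [Real.rpow_one] at this
        calc eNorm x ^ lam ≤ 2 ^ lam * ((t ^ w₂ : ℝ) ^ lam * |u 1| ^ lam) := by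
              rw [← h2]; exact h1
          _ ≤ 2 ^ lam * (t ^ ((d:ℝ) - (w₁:ℝ)) * |u 1|) := by
              rw [h3]
              apply mul_le_mul_of_nonneg_left _ h2lam.le
              exact mul_le_mul_of_nonneg_left h4 (Real.rpow_nonneg ht.le _)
      have habs : |eval x (pderiv 0 (X 1 * φ))|
          = t ^ ((d:ℝ) - (w₁:ℝ)) * (|u 1| * |eval u (pderiv 0 φ)|) := by
        rw [he0, hpow0, hg0u, abs_mul, abs_mul,
          abs_of_pos (Real.rpow_pos_of_pos ht _)]
      have hkey : m₁ * (t ^ ((d:ℝ) - (w₁:ℝ)) * |u 1|) ≤ gradNorm (X 1 * φ) x := by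
        refine le_trans ?_ hgrad0
        rw [habs]
        have htpw : (0:ℝ) ≤ t ^ ((d:ℝ) - (w₁:ℝ)) := (Real.rpow_pos_of_pos ht _).le
        calc m₁ * (t ^ ((d:ℝ) - (w₁:ℝ)) * |u 1|)
            = (t ^ ((d:ℝ) - (w₁:ℝ)) * |u 1|) * m₁ := by ring
          _ ≤ (t ^ ((d:ℝ) - (w₁:ℝ)) * |u 1|) * |eval u (pderiv 0 φ)| :=
              mul_le_mul_of_nonneg_left hm₁u (mul_nonneg htpw (abs_nonneg _))
          _ = t ^ ((d:ℝ) - (w₁:ℝ)) * (|u 1| * |eval u (pderiv 0 φ)|) := by ring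
      calc C * eNorm x ^ lam ≤ (m₁ / 2 ^ lam) * (2 ^ lam * (t ^ ((d:ℝ) - (w₁:ℝ)) * |u 1|)) :=
            mul_le_mul (min_le_left _ _) hrpow
              (Real.rpow_nonneg (eNorm_nonneg x) _) (by positivity)
        _ = m₁ * (t ^ ((d:ℝ) - (w₁:ℝ)) * |u 1|) := by
            field_simp
        _ ≤ gradNorm (X 1 * φ) x := hkey
    · -- case (ii): near the x₁ axis
      have hu1δ : |u 1| ≤ δ := by
        have h1 : t ^ (w₁ - w₂ : ℕ) ≤ t₀ ^ (w₁ - w₂ : ℕ) :=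
          pow_le_pow_left₀ ht.le htle _
        linarith [ht₀pow, hcase.le]
      have hm₂u : m₂ ≤ |eval u (pderiv 1 (X 1 * φ))| := hm₂min u huA1 huA2 hu1δ
      have hxb : eNorm x ≤ 2 * t ^ w₁ := by
        have hb0 : |x 0| ≤ t ^ w₁ := by
          rw [hx0c, abs_mul, abs_of_pos (pow_pos ht w₁)]
          calc t ^ w₁ * |u 0| ≤ t ^ w₁ * 1 :=
                mul_le_mul_of_nonneg_left hu0 (pow_pos ht w₁).le
            _ = t ^ w₁ := mul_one _
        have hb1 : |x 1| ≤ t ^ w₁ := by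
          rw [hx1c, abs_mul, abs_of_pos (pow_pos ht w₂)]
          calc t ^ w₂ * |u 1| ≤ t ^ w₂ * t ^ (w₁ - w₂ : ℕ) :=
                mul_le_mul_of_nonneg_left hcase.le (pow_pos ht w₂).le
            _ = t ^ w₁ := htww
        calc eNorm x ≤ |x 0| + |x 1| := eNorm_le_add x
          _ ≤ 2 * t ^ w₁ := by linarith
      have hrpow : eNorm x ^ lam ≤ 2 ^ lam * t ^ ((d:ℝ) - (w₂:ℝ)) := by
        have h1 : eNorm x ^ lam ≤ (2 * t ^ w₁) ^ lam :=
          Real.rpow_le_rpow (eNorm_nonneg x) hxb hlampos.le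
        have h2 : ((2 : ℝ) * t ^ w₁) ^ lam = 2 ^ lam * ((t ^ w₁ : ℝ)) ^ lam :=
          Real.mul_rpow (by norm_num) (pow_pos ht w₁).le
        have h3 : ((t ^ w₁ : ℝ)) ^ lam = t ^ ((w₁:ℝ) * lam) := by
          rw [← Real.rpow_natCast t w₁, ← Real.rpow_mul ht.le]
        have h4 : t ^ ((w₁:ℝ) * lam) ≤ t ^ ((d:ℝ) - (w₂:ℝ)) :=
          Real.rpow_le_rpow_of_exponent_ge ht ht1 hlamw₁
        calc eNorm x ^ lam ≤ 2 ^ lam * ((t ^ w₁ : ℝ)) ^ lam := by rw [← h2]; exact h1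
          _ ≤ 2 ^ lam * t ^ ((d:ℝ) - (w₂:ℝ)) := by
              rw [h3]
              exact mul_le_mul_of_nonneg_left h4 h2lam.le
      have habs : |eval x (pderiv 1 (X 1 * φ))|
          = t ^ ((d:ℝ) - (w₂:ℝ)) * |eval u (pderiv 1 (X 1 * φ))| := by
        rw [he1, hpow1, abs_mul, abs_of_pos (Real.rpow_pos_of_pos ht _)]
      have hkey : m₂ * t ^ ((d:ℝ) - (w₂:ℝ)) ≤ gradNorm (X 1 * φ) x := by
        refine le_trans ?_ hgrad1
        rw [habs]
        have htpw : (0:ℝ) ≤ t ^ ((d:ℝ) - (w₂:ℝ)) := (Real.rpow_pos_of_pos ht _).le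
        calc m₂ * t ^ ((d:ℝ) - (w₂:ℝ)) = t ^ ((d:ℝ) - (w₂:ℝ)) * m₂ := by ring
          _ ≤ t ^ ((d:ℝ) - (w₂:ℝ)) * |eval u (pderiv 1 (X 1 * φ))| :=
              mul_le_mul_of_nonneg_left hm₂u htpw
      calc C * eNorm x ^ lam ≤ (m₂ / 2 ^ lam) * (2 ^ lam * t ^ ((d:ℝ) - (w₂:ℝ))) :=
            mul_le_mul (min_le_right _ _) hrpow
              (Real.rpow_nonneg (eNorm_nonneg x) _) (by positivity)
        _ = m₂ * t ^ ((d:ℝ) - (w₂:ℝ)) := by field_simp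
        _ ≤ gradNorm (X 1 * φ) x := hkey
end

section
/- Let f : ℝ² → ℝ be a non-degenerate weighted homogeneous polynomial of type (d; w₁, w₂) with w₁ ≥ w₂. Then there exist C > 0 and a neighborhood U of 0 such that ‖∇f(x)‖ ≥ C‖x‖^{(d−w₂)/w₂} for all x ∈ U; consequently L(f) ≤ d/w₂ − 1. -/
open MvPolynomial

lemma eval_scale {n : ℕ} {f : MvPolynomial (Fin n) ℝ} {w : Fin n → ℕ} {d : ℕ}
    (hf : IsWeightedHomog f w d) (t : ℝ) (x : Fin n → ℝ) :
    eval (fun i => t ^ (w i) * x i) f = t ^ d * eval x f := by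
  rw [eval_eq', eval_eq', Finset.mul_sum]
  refine Finset.sum_congr rfl fun α hα => ?_
  have h1 : ∀ i : Fin n, (t ^ (w i) * x i) ^ (α i) = t ^ (α i * w i) * x i ^ (α i) := by
    intro i; rw [mul_pow, ← pow_mul, mul_comm (w i) (α i)]
  calc coeff α f * ∏ i, (t ^ (w i) * x i) ^ (α i)
      = coeff α f * ((∏ i, t ^ (α i * w i)) * ∏ i, x i ^ (α i)) := by
        rw [← Finset.prod_mul_distrib]; congr 1; exact Finset.prod_congr rfl fun i _ => h1 i
    _ = t ^ d * (coeff α f * ∏ i, x i ^ (α i)) := by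
        rw [Finset.prod_pow_eq_pow_sum, hf α hα]; ring

lemma homog_pderiv {f : MvPolynomial (Fin 2) ℝ} {w : Fin 2 → ℕ} {d : ℕ}
    (hf : IsWeightedHomog f w d) (i : Fin 2) :
    IsWeightedHomog (pderiv i f) w (d - w i) := by
  classical
  intro β hβ
  have h : pderiv i f
      = ∑ α ∈ f.support, monomial (α - Finsupp.single i 1) (coeff α f * α i) := by
    conv_lhs => rw [f.as_sum, map_sum]
    exact Finset.sum_congr rfl fun α _ => pderiv_monomial
  rw [h] at hβ
  obtain ⟨α, hαf, hβm⟩ := Finset.mem_biUnion.mp (MvPolynomial.support_sum hβ)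
  rw [mem_support_iff, coeff_monomial] at hβm
  by_cases heq : α - Finsupp.single i 1 = β
  · rw [if_pos heq] at hβm
    have hαi : 0 < α i := by
      rcases Nat.eq_zero_or_pos (α i) with h0 | h1
      · simp [h0] at hβm
      · exact h1
    have hsum := hf α hαf
    have happ : ∀ j : Fin 2, β j = α j - (if i = j then 1 else 0) := by
      intro j; rw [← heq, Finsupp.tsub_apply, Finsupp.single_apply]
    have key : (∑ j, β j * w j) + w i = d := by
      rw [Fin.sum_univ_two] at hsum ⊢
      rw [happ 0, happ 1]
      have ha : α i = (α i - 1) + 1 := (Nat.succ_pred_eq_of_pos hαi).symm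
      rw [← hsum]
      have hi : i = 0 ∨ i = 1 := by
        fin_cases i
        · exact Or.inl rfl
        · exact Or.inr rfl
      rcases hi with rfl | rfl
      · simp only [if_pos rfl, if_neg (by decide : ¬ ((0:Fin 2) = 1)), if_true, Nat.sub_zero]
        conv_rhs => rw [show α 0 = (α 0 - 1) + 1 from ha]
        ring
      · simp only [if_pos rfl, if_neg (by decide : ¬ ((1:Fin 2) = 0)), if_true, Nat.sub_zero]
        conv_rhs => rw [show α 1 = (α 1 - 1) + 1 from ha]
        ring
    omega
  · rw [if_neg heq] at hβm
    exact absurd rfl hβm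

theorem stmt10 (d w₁ w₂ : ℕ) (hd : 0 < d) (hw₂ : 0 < w₂) (hw : w₂ ≤ w₁)
    (f : MvPolynomial (Fin 2) ℝ)
    (hhom : IsWeightedHomog f ![w₁, w₂] d)
    (hnd : Nondeg f) :
    (∃ C > (0 : ℝ), ∃ U ∈ nhds (0 : Fin 2 → ℝ), ∀ x ∈ U,
      C * eNorm x ^ (((d : ℝ) - w₂) / w₂) ≤ gradNorm f x) ∧
    lojExp f ≤ (d : ℝ) / w₂ - 1 := by
  classical
  set w : Fin 2 → ℕ := ![w₁, w₂] with hwdef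
  have hwpos : ∀ i, 0 < w i := by
    intro i
    have hi : i = 0 ∨ i = 1 := by fin_cases i; exacts [Or.inl rfl, Or.inr rfl]
    rcases hi with rfl | rfl
    · show 0 < w₁; omega
    · exact hw₂
  have hwge : ∀ i, w₂ ≤ w i := by
    intro i
    have hi : i = 0 ∨ i = 1 := by fin_cases i; exacts [Or.inl rfl, Or.inr rfl]
    rcases hi with rfl | rfl
    · exact hw
    · exact le_refl _
  obtain ⟨U₀, hU₀, hU₀nd⟩ := hnd
  obtain ⟨ε, hε, hball⟩ := Metric.mem_nhds_iff.mp hU₀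
  -- f ≠ 0
  have hf0 : f ≠ 0 := by
    intro hf
    have hz : (fun _ : Fin 2 => ε / 2) = (0 : Fin 2 → ℝ) := by
      apply hU₀nd
      · apply hball
        rw [Metric.mem_ball]
        rw [dist_pi_lt_iff hε]
        intro i
        simp only [Real.dist_eq, Pi.zero_apply, sub_zero]
        rw [abs_of_pos (half_pos hε)]
        linarith
      · intro i; rw [hf]; simp
    have := congrFun hz 0
    simp at this
    linarith
  -- d ≥ w₂
  have hdw : w₂ ≤ d := by
    obtain ⟨α, hα⟩ := (MvPolynomial.support_nonempty.mpr hf0)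
    have hsum := hhom α hα
    rw [Fin.sum_univ_two] at hsum
    have : 0 < α 0 ∨ 0 < α 1 := by
      by_contra hc
      push_neg at hc
      have h0 : α 0 = 0 := by omega
      have h1 : α 1 = 0 := by omega
      rw [h0, h1] at hsum
      simp at hsum
      omega
    have hw0 : w 0 = w₁ := rfl
    have hw1 : w 1 = w₂ := rfl
    rcases this with h1 | h1
    · calc w₂ ≤ w₁ := hw
        _ ≤ α 0 * w 0 := by rw [hw0]; exact Nat.le_mul_of_pos_left _ h1
        _ ≤ d := by omega
    · calc w₂ ≤ α 1 * w 1 := by rw [hw1]; exact Nat.le_mul_of_pos_left _ h1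
        _ ≤ d := by omega
  -- global nonvanishing of the gradient
  have hglob : ∀ x : Fin 2 → ℝ, x ≠ 0 → ∃ i, eval x (pderiv i f) ≠ 0 := by
    intro x hx
    by_contra hc
    push_neg at hc
    set s : ℝ := min (1/2) (ε / (2 * (|x 0| + |x 1| + 1))) with hs
    have hden : 0 < 2 * (|x 0| + |x 1| + 1) := by positivity
    have hspos : 0 < s := lt_min (by norm_num) (div_pos hε hden)
    have hs1 : s ≤ 1 := le_trans (min_le_left _ _) (by norm_num)
    have hsmall : ∀ i : Fin 2, s ^ (w i) * |x i| < ε := by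
      intro i
      have h1 : s ^ (w i) ≤ s := by
        calc s ^ (w i) ≤ s ^ 1 := pow_le_pow_of_le_one hspos.le hs1 (hwpos i)
          _ = s := pow_one s
      have h2 : s * |x i| < ε := by
        have hxle : |x i| ≤ |x 0| + |x 1| + 1 := by
          have hi : i = 0 ∨ i = 1 := by fin_cases i; exacts [Or.inl rfl, Or.inr rfl]
          have := abs_nonneg (x 0); have := abs_nonneg (x 1)
          rcases hi with rfl | rfl <;> linarith
        have hsle : s ≤ ε / (2 * (|x 0| + |x 1| + 1)) := min_le_right _ _
        calc s * |x i| ≤ (ε / (2 * (|x 0| + |x 1| + 1))) * (|x 0| + |x 1| + 1) := by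
              apply mul_le_mul hsle hxle (abs_nonneg _)
              positivity
          _ = ε / 2 := by field_simp
          _ < ε := by linarith
      calc s ^ (w i) * |x i| ≤ s * |x i| :=
            mul_le_mul_of_nonneg_right h1 (abs_nonneg _)
        _ < ε := h2
    have hmem : (fun i => s ^ (w i) * x i) ∈ U₀ := by
      apply hball
      rw [Metric.mem_ball, dist_pi_lt_iff hε]
      intro i
      rw [Real.dist_eq]
      simpa [abs_mul, abs_of_pos (pow_pos hspos (w i))] using hsmall i
    have hz := hU₀nd _ hmem (by
      intro i
      rw [eval_scale (homog_pderiv hhom i) s x, hc i, mul_zero])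
    apply hx
    ext j
    have := congrFun hz j
    simp only [Pi.zero_apply] at this ⊢
    have hpow : s ^ (w j) ≠ 0 := ne_of_gt (pow_pos hspos _)
    rcases mul_eq_zero.mp this with h | h
    · exact absurd h hpow
    · exact h
  -- continuity of gradNorm
  have hcont : Continuous (gradNorm f) := by
    apply Real.continuous_sqrt.comp
    apply continuous_finset_sum
    intro i _
    exact ((pderiv i f).continuous_eval).pow 2
  -- compact annulus and minimum
  set A : Set (Fin 2 → ℝ) := Metric.closedBall 0 1 \ Metric.ball 0 (1/2) with hA
  have hAc : IsCompact A :=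
    (isCompact_closedBall _ _).diff Metric.isOpen_ball
  have hAne : A.Nonempty := by
    refine ⟨(fun i => if i = 0 then 1 else 0), ?_, ?_⟩
    · rw [Metric.mem_closedBall, dist_pi_le_iff zero_le_one]
      intro i
      rw [Real.dist_eq]
      by_cases h : i = 0 <;> simp [h]
    · rw [Metric.mem_ball]
      intro hlt
      have := dist_le_pi_dist (fun i : Fin 2 => if i = 0 then (1:ℝ) else 0) 0 0
      simp [Real.dist_eq] at this hlt
      linarith
  obtain ⟨y₀, hy₀A, hy₀min⟩ := hAc.exists_isMinOn hAne hcont.continuousOn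
  set m : ℝ := gradNorm f y₀ with hm
  have hy₀ne : y₀ ≠ 0 := by
    intro h0
    have : y₀ ∈ Metric.ball (0 : Fin 2 → ℝ) (1/2) := by
      rw [h0, Metric.mem_ball, dist_self]; norm_num
    exact hy₀A.2 this
  have hmpos : 0 < m := by
    obtain ⟨i, hi⟩ := hglob y₀ hy₀ne
    rw [hm]
    unfold gradNorm
    apply Real.sqrt_pos.mpr
    apply Finset.sum_pos' (fun j _ => sq_nonneg _)
    exact ⟨i, Finset.mem_univ i, by positivity⟩
  -- setup of the exponent
  set lam : ℝ := ((d : ℝ) - w₂) / w₂ with hlam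
  have hw₂R : (0:ℝ) < (w₂:ℝ) := by exact_mod_cast hw₂
  have hdwR : (w₂:ℝ) ≤ (d:ℝ) := by exact_mod_cast hdw
  have hlamnn : 0 ≤ lam := by
    rw [hlam]; apply div_nonneg (by linarith) hw₂R.le
  set k : ℕ := d - w₂ with hk
  have hkcast : (k : ℝ) = (d : ℝ) - w₂ := by
    rw [hk, Nat.cast_sub hdw]
  have hpow_inv : ∀ z : ℝ, 0 ≤ z → ∀ i : Fin 2, (z ^ ((w i : ℝ))⁻¹) ^ (w i) = z := by
    intro z hz i
    rw [← Real.rpow_natCast (z ^ ((w i : ℝ))⁻¹) (w i), ← Real.rpow_mul hz,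
        inv_mul_cancel₀ (Nat.cast_ne_zero.mpr (hwpos i).ne'), Real.rpow_one]
  -- the main pointwise estimate on the unit ball
  have hmain : ∀ x ∈ Metric.ball (0 : Fin 2 → ℝ) 1,
      m * (max |x 0| |x 1|) ^ lam ≤ gradNorm f x := by
    intro x hxball
    by_cases hx0 : x = 0
    · subst hx0
      simp only [Pi.zero_apply, abs_zero, max_self]
      by_cases hdeq : d = w₂
      · have hlam0 : lam = 0 := by rw [hlam, hdeq]; simp
        rw [hlam0, Real.rpow_zero, mul_one]
        have hev : ∀ i, eval (0 : Fin 2 → ℝ) (pderiv i f) = eval y₀ (pderiv i f) := by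
          intro i
          have h := eval_scale (homog_pderiv hhom i) 0 y₀
          have hdwi : d - w i = 0 := by have := hwge i; omega
          rw [hdwi, pow_zero, one_mul] at h
          have hfun : (fun j => (0:ℝ) ^ (w j) * y₀ j) = (0 : Fin 2 → ℝ) := by
            funext j
            simp [zero_pow (hwpos j).ne']
          rw [hfun] at h
          exact h
        have hzz : gradNorm f 0 = m := by
          rw [hm]; unfold gradNorm
          congr 1
          exact Finset.sum_congr rfl fun i _ => by rw [hev i]
        rw [hzz]
      · have hlampos : 0 < lam := by
          rw [hlam]
          apply div_pos _ hw₂R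
          have h1 : w₂ < d := lt_of_le_of_ne hdw (fun h => hdeq h.symm)
          have : (w₂:ℝ) < d := by exact_mod_cast h1
          linarith
        rw [Real.zero_rpow hlampos.ne', mul_zero]
        exact Real.sqrt_nonneg _
    · -- x ≠ 0
      rw [Metric.mem_ball] at hxball
      have hxlt : ∀ i : Fin 2, |x i| < 1 := by
        intro i
        have h := dist_le_pi_dist x 0 i
        rw [Real.dist_eq, Pi.zero_apply, sub_zero] at h
        linarith
      have habpos : 0 < |x 0| ∨ 0 < |x 1| := by
        by_contra hc
        push_neg at hc
        apply hx0
        funext j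
        have hj : j = 0 ∨ j = 1 := by fin_cases j; exacts [Or.inl rfl, Or.inr rfl]
        have h0 := abs_nonneg (x 0); have h1 := abs_nonneg (x 1)
        rcases hj with rfl | rfl <;>
          simp only [Pi.zero_apply] <;> [skip; skip] <;> first
          | (have : |x 0| = 0 := le_antisymm hc.1 h0; exact abs_eq_zero.mp this)
          | (have : |x 1| = 0 := le_antisymm hc.2 h1; exact abs_eq_zero.mp this)
      set t : ℝ := max (|x 0| ^ ((w 0 : ℝ))⁻¹) (|x 1| ^ ((w 1 : ℝ))⁻¹) with ht
      have htpos : 0 < t := by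
        rcases habpos with h | h
        · exact lt_of_lt_of_le (Real.rpow_pos_of_pos h _) (le_max_left _ _)
        · exact lt_of_lt_of_le (Real.rpow_pos_of_pos h _) (le_max_right _ _)
      have ht1 : t ≤ 1 := by
        apply max_le
        · exact Real.rpow_le_one (abs_nonneg _) (hxlt 0).le (by positivity)
        · exact Real.rpow_le_one (abs_nonneg _) (hxlt 1).le (by positivity)
      have hle_t : ∀ i : Fin 2, |x i| ^ ((w i : ℝ))⁻¹ ≤ t := by
        intro i
        have hi : i = 0 ∨ i = 1 := by fin_cases i; exacts [Or.inl rfl, Or.inr rfl]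
        rcases hi with rfl | rfl
        · exact le_max_left _ _
        · exact le_max_right _ _
      have htw : ∀ i : Fin 2, |x i| ≤ t ^ (w i) := by
        intro i
        calc |x i| = (|x i| ^ ((w i : ℝ))⁻¹) ^ (w i) := (hpow_inv _ (abs_nonneg _) i).symm
          _ ≤ t ^ (w i) := pow_le_pow_left₀ (Real.rpow_nonneg (abs_nonneg _) _) (hle_t i) _
      have hti : ∃ i : Fin 2, t ^ (w i) = |x i| := by
        rcases max_cases (|x 0| ^ ((w 0 : ℝ))⁻¹) (|x 1| ^ ((w 1 : ℝ))⁻¹) with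
          ⟨heqt, _⟩ | ⟨heqt, _⟩
        · exact ⟨0, by rw [ht, heqt]; exact hpow_inv _ (abs_nonneg _) 0⟩
        · exact ⟨1, by rw [ht, heqt]; exact hpow_inv _ (abs_nonneg _) 1⟩
      set y : Fin 2 → ℝ := fun i => x i / t ^ (w i) with hy
      have htne : ∀ i : Fin 2, t ^ (w i) ≠ 0 := fun i => (pow_pos htpos _).ne'
      have hyA : y ∈ A := by
        refine ⟨?_, ?_⟩
        · rw [Metric.mem_closedBall, dist_pi_le_iff zero_le_one]
          intro i
          rw [Real.dist_eq, Pi.zero_apply, sub_zero, hy]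
          simp only
          rw [abs_div, abs_of_pos (pow_pos htpos (w i)), div_le_one (pow_pos htpos _)]
          exact htw i
        · rw [Metric.mem_ball]
          intro hlt
          obtain ⟨i, hi⟩ := hti
          have h := dist_le_pi_dist y 0 i
          rw [Real.dist_eq, Pi.zero_apply, sub_zero] at h
          have hyi : |y i| = 1 := by
            rw [hy]
            simp only
            rw [abs_div, abs_of_pos (pow_pos htpos _), hi, div_self]
            rw [← hi]
            exact (pow_pos htpos _).ne'
          rw [hyi] at h
          linarith
      have hyge : m ≤ gradNorm f y := hy₀min hyA
      have hxy : ∀ i : Fin 2, eval x (pderiv i f) = t ^ (d - w i) * eval y (pderiv i f) := by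
        intro i
        have h := eval_scale (homog_pderiv hhom i) t y
        have hxx : (fun j => t ^ (w j) * y j) = x := by
          funext j
          rw [hy]
          simp only
          rw [mul_comm, div_mul_cancel₀ _ (htne j)]
        rw [hxx] at h
        exact h
      have hsum_ge : t ^ k * gradNorm f y ≤ gradNorm f x := by
        unfold gradNorm
        have h1 : ∀ i : Fin 2, (t ^ k)^2 * (eval y (pderiv i f))^2
            ≤ (eval x (pderiv i f))^2 := by
          intro i
          rw [hxy i, mul_pow]
          apply mul_le_mul_of_nonneg_right _ (sq_nonneg _)
          rw [← pow_mul, ← pow_mul]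
          apply pow_le_pow_of_le_one htpos.le ht1
          have h2 := hwge i
          omega
        calc t ^ k * Real.sqrt (∑ i, (eval y (pderiv i f))^2)
            = Real.sqrt ((t ^ k)^2 * ∑ i, (eval y (pderiv i f))^2) := by
              rw [Real.sqrt_mul (sq_nonneg _), Real.sqrt_sq (pow_nonneg htpos.le _)]
          _ ≤ Real.sqrt (∑ i, (eval x (pderiv i f))^2) := by
              apply Real.sqrt_le_sqrt
              rw [Finset.mul_sum]
              exact Finset.sum_le_sum fun i _ => h1 i
      have hMt : (max |x 0| |x 1|) ^ ((w₂ : ℝ))⁻¹ ≤ t := by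
        have hinv : ((w 0 : ℝ))⁻¹ ≤ ((w₂ : ℝ))⁻¹ := by
          apply inv_anti₀ hw₂R
          exact_mod_cast hwge 0
        rcases max_cases (|x 0|) (|x 1|) with ⟨hM, _⟩ | ⟨hM, _⟩
        · rw [hM]
          rcases eq_or_lt_of_le (abs_nonneg (x 0)) with h0 | h0
          · rw [← h0, Real.zero_rpow (by positivity)]
            exact htpos.le
          · calc |x 0| ^ ((w₂:ℝ))⁻¹ ≤ |x 0| ^ ((w 0 : ℝ))⁻¹ :=
                  Real.rpow_le_rpow_of_exponent_ge h0 (hxlt 0).le hinv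
              _ ≤ t := hle_t 0
        · rw [hM]
          have : ((w 1 : ℝ))⁻¹ = ((w₂ : ℝ))⁻¹ := rfl
          rw [← this]
          exact hle_t 1
      have hM0 : (0:ℝ) ≤ max |x 0| |x 1| := le_trans (abs_nonneg _) (le_max_left _ _)
      have hMk : (max |x 0| |x 1|) ^ lam ≤ t ^ k := by
        calc (max |x 0| |x 1|) ^ lam
            = ((max |x 0| |x 1|) ^ ((w₂:ℝ))⁻¹) ^ k := by
              rw [← Real.rpow_natCast ((max |x 0| |x 1|) ^ ((w₂:ℝ))⁻¹) k,
                  ← Real.rpow_mul hM0, hkcast, hlam]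
              congr 1
              field_simp
          _ ≤ t ^ k := pow_le_pow_left₀ (Real.rpow_nonneg hM0 _) hMt k
      calc m * (max |x 0| |x 1|) ^ lam ≤ m * (t ^ k) :=
            mul_le_mul_of_nonneg_left hMk hmpos.le
        _ = t ^ k * m := mul_comm _ _
        _ ≤ t ^ k * gradNorm f y := mul_le_mul_of_nonneg_left hyge (pow_nonneg htpos.le _)
        _ ≤ gradNorm f x := hsum_ge
  -- comparison of eNorm with the max norm
  have henorm : ∀ x : Fin 2 → ℝ, eNorm x ≤ Real.sqrt 2 * max |x 0| |x 1| := by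
    intro x
    have hM0 : (0:ℝ) ≤ max |x 0| |x 1| := le_trans (abs_nonneg _) (le_max_left _ _)
    unfold eNorm
    rw [Fin.sum_univ_two,
        show Real.sqrt 2 * max |x 0| |x 1| = Real.sqrt (2 * (max |x 0| |x 1|)^2) by
          rw [Real.sqrt_mul (by norm_num), Real.sqrt_sq hM0]]
    apply Real.sqrt_le_sqrt
    have h0 : |x 0| ≤ max |x 0| |x 1| := le_max_left _ _
    have h1 : |x 1| ≤ max |x 0| |x 1| := le_max_right _ _
    have hs0 := sq_abs (x 0); have hs1 := sq_abs (x 1)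
    nlinarith [abs_nonneg (x 0), abs_nonneg (x 1)]
  have heN0 : ∀ x : Fin 2 → ℝ, 0 ≤ eNorm x := fun x => Real.sqrt_nonneg _
  -- Part 1
  have hpart1 : ∃ C > (0:ℝ), ∃ U ∈ nhds (0 : Fin 2 → ℝ), ∀ x ∈ U,
      C * eNorm x ^ lam ≤ gradNorm f x := by
    have hs2 : (0:ℝ) < Real.sqrt 2 ^ lam :=
      Real.rpow_pos_of_pos (Real.sqrt_pos.mpr (by norm_num)) _
    refine ⟨m / Real.sqrt 2 ^ lam, by positivity, Metric.ball 0 1,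
      Metric.ball_mem_nhds _ one_pos, ?_⟩
    intro x hx
    have hM0 : (0:ℝ) ≤ max |x 0| |x 1| := le_trans (abs_nonneg _) (le_max_left _ _)
    have h2 : eNorm x ^ lam ≤ (Real.sqrt 2 * max |x 0| |x 1|) ^ lam :=
      Real.rpow_le_rpow (heN0 x) (henorm x) hlamnn
    have h3 : (Real.sqrt 2 * max |x 0| |x 1|) ^ lam
        = Real.sqrt 2 ^ lam * (max |x 0| |x 1|) ^ lam :=
      Real.mul_rpow (Real.sqrt_nonneg _) hM0
    calc m / Real.sqrt 2 ^ lam * eNorm x ^ lam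
        ≤ m / Real.sqrt 2 ^ lam * (Real.sqrt 2 ^ lam * (max |x 0| |x 1|) ^ lam) := by
          rw [← h3]
          exact mul_le_mul_of_nonneg_left h2 (by positivity)
      _ = m * (max |x 0| |x 1|) ^ lam := by field_simp
      _ ≤ gradNorm f x := hmain x hx
  refine ⟨hpart1, ?_⟩
  -- Part 2
  have hbdd : BddBelow {lam' : ℝ | 0 < lam' ∧ LojIneq f lam'} := ⟨0, fun l hl => hl.1.le⟩
  by_cases hdeq : d = w₂
  · have hrhs : (d:ℝ)/w₂ - 1 = 0 := by
      rw [hdeq]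
      field_simp
      norm_num
    unfold lojExp
    rw [hrhs]
    have hloj : ∀ ε : ℝ, 0 < ε → LojIneq f ε := by
      intro ε hε
      have hs2 : (0:ℝ) < Real.sqrt 2 ^ ε :=
        Real.rpow_pos_of_pos (Real.sqrt_pos.mpr (by norm_num)) _
      refine ⟨m / Real.sqrt 2 ^ ε, by positivity, Metric.ball 0 1,
        Metric.ball_mem_nhds _ one_pos, ?_⟩
      intro x hx
      have hgm : m ≤ gradNorm f x := by
        have h := hmain x hx
        have hlam0 : lam = 0 := by rw [hlam, hdeq]; simp
        rw [hlam0, Real.rpow_zero, mul_one] at h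
        exact h
      have hen : eNorm x ≤ Real.sqrt 2 := by
        rw [Metric.mem_ball] at hx
        have hxlt : ∀ i : Fin 2, |x i| < 1 := by
          intro i
          have h := dist_le_pi_dist x 0 i
          rw [Real.dist_eq, Pi.zero_apply, sub_zero] at h
          linarith
        calc eNorm x ≤ Real.sqrt 2 * max |x 0| |x 1| := henorm x
          _ ≤ Real.sqrt 2 * 1 := by
              apply mul_le_mul_of_nonneg_left _ (Real.sqrt_nonneg _)
              exact max_le (hxlt 0).le (hxlt 1).le
          _ = Real.sqrt 2 := mul_one _
      calc m / Real.sqrt 2 ^ ε * eNorm x ^ ε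
          ≤ m / Real.sqrt 2 ^ ε * Real.sqrt 2 ^ ε := by
            apply mul_le_mul_of_nonneg_left _ (by positivity)
            exact Real.rpow_le_rpow (heN0 x) hen hε.le
        _ = m := by field_simp
        _ ≤ gradNorm f x := hgm
    apply le_of_forall_pos_le_add
    intro ε hε
    have h := csInf_le hbdd (Set.mem_setOf.mpr ⟨hε, hloj ε hε⟩)
    linarith
  · have hlampos : 0 < lam := by
      rw [hlam]
      apply div_pos _ hw₂R
      have h1 : w₂ < d := lt_of_le_of_ne hdw (fun h => hdeq h.symm)
      have : (w₂:ℝ) < d := by exact_mod_cast h1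
      linarith
    have hin : lam ∈ {lam' : ℝ | 0 < lam' ∧ LojIneq f lam'} :=
      Set.mem_setOf.mpr ⟨hlampos, hpart1⟩
    have h := csInf_le hbdd hin
    unfold lojExp
    calc sInf {lam' : ℝ | 0 < lam' ∧ LojIneq f lam'} ≤ lam := h
      _ = (d:ℝ)/w₂ - 1 := by
          rw [hlam, sub_div, div_self hw₂R.ne']
end

section
/- The polynomial g(x, y) = x³ − x y⁶ + y⁹ (weighted homogeneous of type (9; 3, 1) with an isolated singularity at the origin) has Łojasiewicz exponent L(g) = 8. -/
open MvPolynomial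

/-! ### Auxiliary lemmas -/

private lemma keyIneq (a b : ℝ) (ha : a^2 ≤ 1/4) (hb : b^2 ≤ 1/4) :
    (a^2+b^2)^8 ≤ 9216 * ((3*a^2 - b^6)^2 + (-(6*a*b^5) + 9*b^8)^2) := by
  rcases le_or_gt (a^2) (b^4) with h | h
  · have hb4 : b^4 ≤ b^2 := by nlinarith [sq_nonneg b]
    have hsum : a^2 + b^2 ≤ 2*b^2 := by linarith
    have h8 : (a^2+b^2)^8 ≤ 256*b^16 := by
      calc (a^2+b^2)^8 ≤ (2*b^2)^8 := pow_le_pow_left₀ (by positivity) hsum 8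
        _ = 256*b^16 := by ring
    rcases le_or_gt (b^6/324) ((3*b^3-2*a)^2) with h2 | h2
    · have hv : 9*b^10*(b^6/324) ≤ 9*b^10*(3*b^3-2*a)^2 :=
        mul_le_mul_of_nonneg_left h2 (by positivity)
      have hveq : (-(6*a*b^5) + 9*b^8)^2 = 9*b^10*(3*b^3-2*a)^2 := by ring
      nlinarith [sq_nonneg (3*a^2 - b^6)]
    · have h18 : 18*(b^3*(3*b^3-2*a)) ≤ b^6 := by
        nlinarith [sq_nonneg (b^3 - 18*(3*b^3-2*a)), h2.le]
      have hexp : 4*(3*a^2-b^6) = 23*b^6 - 18*(b^3*(3*b^3-2*a)) + 3*(3*b^3-2*a)^2 := by ring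
      have hu : (11/2)*b^6 ≤ 3*a^2 - b^6 := by nlinarith [sq_nonneg (3*b^3-2*a)]
      have hu2 : ((11/2)*b^6)^2 ≤ (3*a^2-b^6)^2 :=
        mul_self_le_mul_self (by positivity) hu |>.trans_eq (by ring) |>.trans_eq' (by ring)
      have hb16 : b^16 ≤ b^12 := by
        nlinarith [pow_nonneg (sq_nonneg b) 6, sq_nonneg (b^2), sq_nonneg b]
      nlinarith [sq_nonneg (-(6*a*b^5) + 9*b^8)]
  · have hb6 : b^6 ≤ a^2/4 := by nlinarith [sq_nonneg b]
    have hu : (11/4)*a^2 ≤ 3*a^2 - b^6 := by linarith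
    have hu2 : ((11/4)*a^2)^2 ≤ (3*a^2-b^6)^2 :=
      mul_self_le_mul_self (by positivity) hu |>.trans_eq (by ring) |>.trans_eq' (by ring)
    have hsum : (a^2+b^2)^2 ≤ 3*a^2 := by nlinarith [sq_nonneg a, sq_nonneg b, sq_nonneg (a*b)]
    have h8 : (a^2+b^2)^8 ≤ 81*a^8 := by
      calc (a^2+b^2)^8 = ((a^2+b^2)^2)^4 := by ring
        _ ≤ (3*a^2)^4 := pow_le_pow_left₀ (by positivity) hsum 4
        _ = 81*a^8 := by ring
    have h4 : a^4 ≤ 1/16 := by nlinarith [sq_nonneg a]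
    have ha8 : a^8 ≤ a^4 := by nlinarith [mul_nonneg (sub_nonneg.2 h4) (sq_nonneg (a^2))]
    nlinarith [sq_nonneg (-(6*a*b^5) + 9*b^8)]

private lemma gradNorm_eq (x : Fin 2 → ℝ) :
    gradNorm ((X 0) ^ 3 - X 0 * (X 1) ^ 6 + (X 1) ^ 9 : MvPolynomial (Fin 2) ℝ) x
      = Real.sqrt ((3*(x 0)^2 - (x 1)^6)^2 + (-(6*(x 0)*(x 1)^5) + 9*(x 1)^8)^2) := by
  unfold gradNorm
  rw [Fin.sum_univ_two]
  congr 1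
  simp [pderiv_X, Pi.single_apply]; ring

private lemma eNorm_eq (x : Fin 2 → ℝ) : eNorm x = Real.sqrt ((x 0)^2 + (x 1)^2) := by
  unfold eNorm; rw [Fin.sum_univ_two]

private lemma loj8 :
    LojIneq ((X 0) ^ 3 - X 0 * (X 1) ^ 6 + (X 1) ^ 9 : MvPolynomial (Fin 2) ℝ) 8 := by
  refine ⟨1/96, by norm_num, Metric.ball 0 (1/2), Metric.ball_mem_nhds 0 (by norm_num), ?_⟩
  intro x hx
  have hx' : ‖x‖ < 1/2 := by simpa [mem_ball_zero_iff] using hx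
  have h0 : |x 0| < 1/2 := lt_of_le_of_lt ((Real.norm_eq_abs _) ▸ norm_le_pi_norm x 0) hx'
  have h1 : |x 1| < 1/2 := lt_of_le_of_lt ((Real.norm_eq_abs _) ▸ norm_le_pi_norm x 1) hx'
  have ha : (x 0)^2 ≤ 1/4 := by nlinarith [sq_abs (x 0), abs_nonneg (x 0)]
  have hb : (x 1)^2 ≤ 1/4 := by nlinarith [sq_abs (x 1), abs_nonneg (x 1)]
  rw [gradNorm_eq, eNorm_eq, show ((8:ℝ)) = ((8:ℕ):ℝ) by norm_num, Real.rpow_natCast]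
  have hs : (0:ℝ) ≤ (x 0)^2 + (x 1)^2 := by positivity
  have hE : Real.sqrt ((x 0)^2 + (x 1)^2) ^ (8:ℕ) = ((x 0)^2 + (x 1)^2)^4 := by
    rw [show (Real.sqrt ((x 0)^2 + (x 1)^2)) ^ (8:ℕ)
        = ((Real.sqrt ((x 0)^2 + (x 1)^2))^2)^4 by ring, Real.sq_sqrt hs]
  rw [hE]
  have hkey := keyIneq (x 0) (x 1) ha hb
  have h2 : (1/96 * ((x 0)^2 + (x 1)^2)^4)^2
      ≤ (3*(x 0)^2 - (x 1)^6)^2 + (-(6*(x 0)*(x 1)^5) + 9*(x 1)^8)^2 := by nlinarith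
  calc 1/96 * ((x 0)^2 + (x 1)^2)^4
      = Real.sqrt ((1/96 * ((x 0)^2 + (x 1)^2)^4)^2) := (Real.sqrt_sq (by positivity)).symm
    _ ≤ _ := Real.sqrt_le_sqrt h2

private lemma lojLower (lam : ℝ) (hl : 0 < lam)
    (H : LojIneq ((X 0) ^ 3 - X 0 * (X 1) ^ 6 + (X 1) ^ 9 : MvPolynomial (Fin 2) ℝ) lam) :
    8 ≤ lam := by
  by_contra hcon
  push_neg at hcon
  obtain ⟨C, hC, U, hU, h⟩ := H
  obtain ⟨ε, hε, hball⟩ := Metric.mem_nhds_iff.1 hU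
  have h3 : Real.sqrt 3 ^ 2 = 3 := Real.sq_sqrt (by norm_num)
  have h3p : (0:ℝ) < Real.sqrt 3 := Real.sqrt_pos.2 (by norm_num)
  have h3ge1 : (1:ℝ) ≤ Real.sqrt 3 := by nlinarith
  have h3lt : Real.sqrt 3 < 2 := by nlinarith
  set K : ℝ := 9 - 2*Real.sqrt 3 with hKdef
  have hK : 0 < K := by simp only [hKdef]; linarith
  set e : ℝ := 8 - lam with hedef
  have he : 0 < e := by simp only [hedef]; linarith
  set t : ℝ := min (ε/2) (min 1 ((C/(2*K)) ^ (1/e))) with htdef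
  have ht0 : 0 < t :=
    lt_min (by positivity) (lt_min one_pos (Real.rpow_pos_of_pos (by positivity) _))
  have ht1 : t ≤ 1 := le_trans (min_le_right _ _) (min_le_left _ _)
  have htε : t < ε := lt_of_le_of_lt (min_le_left _ _) (by linarith)
  have hte : t ≤ (C/(2*K)) ^ (1/e) := le_trans (min_le_right _ _) (min_le_right _ _)
  set p : Fin 2 → ℝ := ![t^3/Real.sqrt 3, t] with hpdef
  have ht2 : t^2 ≤ 1 := by nlinarith
  have ht3 : t^3 ≤ t := by nlinarith [mul_nonneg ht0.le (sub_nonneg.2 ht2)]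
  have hp0 : p 0 = t^3/Real.sqrt 3 := rfl
  have hp1 : p 1 = t := rfl
  have hp0pos : 0 < p 0 := by rw [hp0]; positivity
  have hp0le : p 0 ≤ t := by
    rw [hp0]; exact (div_le_self (by positivity) h3ge1).trans ht3
  have hpmem : p ∈ Metric.ball (0 : Fin 2 → ℝ) ε := by
    rw [Metric.mem_ball, dist_pi_lt_iff hε]
    intro i
    fin_cases i
    · simpa [Real.dist_eq, abs_of_pos hp0pos] using lt_of_le_of_lt hp0le htε
    · simpa [hp1, Real.dist_eq, abs_of_pos ht0] using htε
  -- gradient at p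
  have e0 : eval p (pderiv 0 ((X 0) ^ 3 - X 0 * (X 1) ^ 6 + (X 1) ^ 9
      : MvPolynomial (Fin 2) ℝ)) = 0 := by
    simp [hpdef, pderiv_X, Pi.single_apply]
    field_simp
    ring_nf
    rw [h3]; ring
  have e1 : eval p (pderiv 1 ((X 0) ^ 3 - X 0 * (X 1) ^ 6 + (X 1) ^ 9
      : MvPolynomial (Fin 2) ℝ)) = K * t^8 := by
    simp only [hpdef, hKdef]
    simp [pderiv_X, Pi.single_apply]
    field_simp
    ring_nf
    linear_combination 2*h3
  have hgrad : gradNorm ((X 0) ^ 3 - X 0 * (X 1) ^ 6 + (X 1) ^ 9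
      : MvPolynomial (Fin 2) ℝ) p = K * t^8 := by
    unfold gradNorm
    rw [Fin.sum_univ_two, e0, e1,
      show (0:ℝ)^2 + (K*t^8)^2 = (K*t^8)^2 by ring,
      Real.sqrt_sq (mul_nonneg hK.le (by positivity))]
  -- eNorm lower bound
  have hEn : t ≤ eNorm p := by
    rw [eNorm_eq, hp0, hp1]
    calc t = Real.sqrt (t^2) := (Real.sqrt_sq ht0.le).symm
      _ ≤ Real.sqrt ((t^3/Real.sqrt 3)^2 + t^2) :=
          Real.sqrt_le_sqrt (le_add_of_nonneg_left (by positivity))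
  have hmain := h p (hball hpmem)
  rw [hgrad] at hmain
  have hrle : C * t ^ lam ≤ K * t^8 := by
    refine le_trans ?_ hmain
    exact mul_le_mul_of_nonneg_left (Real.rpow_le_rpow ht0.le hEn hl.le) hC.le
  have ht8 : (t:ℝ)^(8:ℕ) = t^lam * t^e := by
    rw [← Real.rpow_natCast t 8, ← Real.rpow_add ht0]
    norm_num [hedef]
  have hte2 : t^e ≤ C/(2*K) := by
    calc t^e ≤ ((C/(2*K))^(1/e))^e := Real.rpow_le_rpow ht0.le hte he.le
      _ = C/(2*K) := by
          rw [← Real.rpow_mul (by positivity), one_div_mul_cancel he.ne', Real.rpow_one]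
  have hpow : 0 < t^lam := Real.rpow_pos_of_pos ht0 lam
  have hfin : K * t^8 ≤ (C/2) * t^lam := by
    rw [ht8]
    calc K * (t^lam * t^e) ≤ K * (t^lam * (C/(2*K))) := by
          exact mul_le_mul_of_nonneg_left (mul_le_mul_of_nonneg_left hte2 hpow.le) hK.le
      _ = (C/2) * t^lam := by field_simp
  nlinarith [mul_pos hC hpow]

theorem stmt14 :
    lojExp ((X 0) ^ 3 - X 0 * (X 1) ^ 6 + (X 1) ^ 9 : MvPolynomial (Fin 2) ℝ) = 8 := by
  have h8 : (8:ℝ) ∈ {lam : ℝ | 0 < lam ∧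
      LojIneq ((X 0) ^ 3 - X 0 * (X 1) ^ 6 + (X 1) ^ 9 : MvPolynomial (Fin 2) ℝ) lam} :=
    ⟨by norm_num, loj8⟩
  unfold lojExp
  apply le_antisymm
  · exact csInf_le ⟨8, fun x hx => lojLower x hx.1 hx.2⟩ h8
  · exact le_csInf ⟨8, h8⟩ (fun x hx => lojLower x hx.1 hx.2)
end
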